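/- For every k ∈ ℕ there exists a constant c > 0 such that for all ζ ∈ ℂ^{2k+1} with Im ζ₁ < Im ζ₂ < ⋯ < Im ζ_{2k+1} < Im ζ₁ + π: |T_{2k+1}(ζ)| ≤ c · (∏_{1 ≤ i < j ≤ 2k+1} |ζ_i − ζ_j + iπ|^{−1}) · exp(Σ_{j=1}^{2k+1} |Re ζ_j|). -/

import Mathlib

/-- The antisymmetric building block
`T_m(ζ) = (1/(2^k k!)) Σ_{σ ∈ S_m} sgn(σ) ∏_{j=1}^{k} tanh((ζ_{σ(2j−1)} − ζ_{σ(2j)})/2)`,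
with `k = ⌊m/2⌋`. -/
noncomputable def T (m : ℕ) (ζ : Fin m → ℂ) : ℂ :=
  (1 / ((2 ^ (m / 2) : ℂ) * ((m / 2).factorial : ℂ))) *
    ∑ σ : Equiv.Perm (Fin m), ((Equiv.Perm.sign σ : ℤ) : ℂ) *
      ∏ j : Fin (m / 2),
        Complex.tanh ((ζ (σ ⟨2 * (j : ℕ), by have := j.isLt; omega⟩) -
          ζ (σ ⟨2 * (j : ℕ) + 1, by have := j.isLt; omega⟩)) / 2)


open Complex Finset


lemma absSq_cosh (w : ℂ) :
    ‖Complex.cosh w‖ ^ 2 = Real.sinh w.re ^ 2 + Real.cos w.im ^ 2 := by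
  have h : Complex.cosh w = ((Real.cosh w.re * Real.cos w.im : ℝ) : ℂ) +
      ((Real.sinh w.re * Real.sin w.im : ℝ) : ℂ) * Complex.I := by
    conv_lhs => rw [← Complex.re_add_im w]
    rw [Complex.cosh_add, Complex.cosh_mul_I, Complex.sinh_mul_I, ← Complex.ofReal_cosh,
      ← Complex.ofReal_sinh, ← Complex.ofReal_cos, ← Complex.ofReal_sin]
    push_cast
    ring
  rw [Complex.sq_norm, h, Complex.normSq_add_mul_I]
  linear_combination (Real.cos w.im) ^ 2 * Real.cosh_sq w.re +
    (Real.sinh w.re) ^ 2 * Real.sin_sq_add_cos_sq w.im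

lemma absSq_sinh (w : ℂ) :
    ‖Complex.sinh w‖ ^ 2 = Real.sinh w.re ^ 2 + Real.sin w.im ^ 2 := by
  have h : Complex.sinh w = ((Real.sinh w.re * Real.cos w.im : ℝ) : ℂ) +
      ((Real.cosh w.re * Real.sin w.im : ℝ) : ℂ) * Complex.I := by
    conv_lhs => rw [← Complex.re_add_im w]
    rw [Complex.sinh_add, Complex.cosh_mul_I, Complex.sinh_mul_I, ← Complex.ofReal_cosh,
      ← Complex.ofReal_sinh, ← Complex.ofReal_cos, ← Complex.ofReal_sin]
    push_cast
    ring
  rw [Complex.sq_norm, h, Complex.normSq_add_mul_I]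
  linear_combination (Real.sin w.im) ^ 2 * Real.cosh_sq w.re +
    (Real.sinh w.re) ^ 2 * Real.sin_sq_add_cos_sq w.im

lemma sq_le_sinh_sq (x : ℝ) : x ^ 2 ≤ Real.sinh x ^ 2 := by
  rcases le_or_gt 0 x with h | h
  · have h1 : x ≤ Real.sinh x := Real.self_le_sinh_iff.mpr h
    nlinarith [Real.sinh_nonneg_iff.mpr h]
  · have h1 : -x ≤ Real.sinh (-x) := Real.self_le_sinh_iff.mpr (by linarith)
    rw [Real.sinh_neg] at h1
    nlinarith [Real.sinh_nonpos_iff.mpr h.le]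

set_option maxHeartbeats 1600000 in
lemma tanh_half_bound (z : ℂ) (h1 : -Real.pi < z.im) (h2 : z.im < 0) :
    ‖Complex.tanh (z / 2)‖ ≤
      9 * (1 + (‖z + Real.pi * Complex.I‖)⁻¹) := by
  have hpi := Real.pi_pos
  set w := z / 2 with hw
  have hy : w.im = z.im / 2 := by
    rw [hw, show (2 : ℂ) = ((2 : ℝ) : ℂ) by norm_num, Complex.div_ofReal_im]
  have hy1 : -(Real.pi / 2) < w.im := by rw [hy]; linarith
  have hy2 : w.im < 0 := by rw [hy]; linarith
  have hcos_pos : 0 < Real.cos w.im :=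
    Real.cos_pos_of_mem_Ioo ⟨by linarith, by linarith⟩
  have hC2 := absSq_cosh w
  have hS2 := absSq_sinh w
  have hcosh_pos : 0 < ‖Complex.cosh w‖ := by
    have h0 : ‖Complex.cosh w‖ ^ 2 > 0 := by
      nlinarith [sq_nonneg (Real.sinh w.re)]
    nlinarith [norm_nonneg (Complex.cosh w)]
  have hsinh_nonneg : 0 ≤ ‖Complex.sinh w‖ := norm_nonneg _
  have htanh : ‖Complex.tanh w‖ =
      ‖Complex.sinh w‖ / ‖Complex.cosh w‖ := by
    rw [Complex.tanh_eq_sinh_div_cosh, norm_div]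
  have hinv_nonneg : 0 ≤ (‖z + Real.pi * Complex.I‖)⁻¹ := by positivity
  rcases le_or_gt |w.re| 1 with hx | hx
  · -- small real part: use pole factor
    have hD2r : ‖z + Real.pi * Complex.I‖ =
        2 * ‖w + ((Real.pi / 2 : ℝ) : ℂ) * Complex.I‖ := by
      rw [show z + Real.pi * Complex.I = 2 * (w + ((Real.pi / 2 : ℝ) : ℂ) * Complex.I) by
        rw [hw]; push_cast; ring]
      rw [norm_mul, Complex.norm_two]
    set r := ‖w + ((Real.pi / 2 : ℝ) : ℂ) * Complex.I‖ with hr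
    have hrpos : 0 < r := by
      rw [hr]
      apply norm_pos_iff.mpr
      intro h
      have him := congrArg Complex.im h
      simp at him
      linarith
    have hr2 : r ^ 2 = w.re ^ 2 + (w.im + Real.pi / 2) ^ 2 := by
      rw [hr, Complex.sq_norm, Complex.normSq_apply]
      simp
      ring
    have ht0 : 0 ≤ w.im + Real.pi / 2 := by linarith
    have hjordan : 2 / Real.pi * (w.im + Real.pi / 2) ≤ Real.cos w.im := by
      have := Real.mul_le_sin (x := w.im + Real.pi / 2) ht0 (by linarith)
      rwa [Real.sin_add_pi_div_two] at this
    have hsinh_sq := sq_le_sinh_sq w.re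
    have h4 : (2 / Real.pi) ^ 2 ≤ 1 := by
      rw [div_pow, div_le_one (by positivity)]
      nlinarith [Real.pi_gt_three]
    have hcos2 : (2 / Real.pi) ^ 2 * (w.im + Real.pi / 2) ^ 2 ≤ Real.cos w.im ^ 2 := by
      have hj2 := mul_self_le_mul_self
        (mul_nonneg (by positivity : (0:ℝ) ≤ 2 / Real.pi) ht0) hjordan
      nlinarith [hj2]
    have hx2 : (2 / Real.pi) ^ 2 * w.re ^ 2 ≤ Real.sinh w.re ^ 2 := by
      nlinarith [sq_nonneg w.re, hsinh_sq, h4]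
    have hC2lower : (2 / Real.pi) ^ 2 * r ^ 2 ≤ ‖Complex.cosh w‖ ^ 2 := by
      rw [hC2, hr2]
      have hdist : (2 / Real.pi) ^ 2 * (w.re ^ 2 + (w.im + Real.pi / 2) ^ 2) =
          (2 / Real.pi) ^ 2 * w.re ^ 2 + (2 / Real.pi) ^ 2 * (w.im + Real.pi / 2) ^ 2 := by
        ring
      linarith [hcos2, hx2, hdist.le, hdist.ge]
    have hcosh_ge : 2 / Real.pi * r ≤ ‖Complex.cosh w‖ := by
      nlinarith [mul_pos (show (0:ℝ) < 2 / Real.pi by positivity) hrpos]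
    have hcx : Real.cosh w.re ≤ Real.exp 1 := by
      rw [Real.cosh_eq]
      obtain ⟨ha, hb⟩ := abs_le.mp hx
      have e1 : Real.exp w.re ≤ Real.exp 1 := Real.exp_le_exp.mpr (by linarith)
      have e2 : Real.exp (-w.re) ≤ Real.exp 1 := Real.exp_le_exp.mpr (by linarith)
      linarith
    have hsinh_le_cosh : ‖Complex.sinh w‖ ≤ Real.cosh w.re := by
      nlinarith [Real.cosh_sq w.re, Real.sin_sq_le_one w.im, Real.cosh_pos w.re]
    have hsc : ‖Complex.sinh w‖ ≤ Real.exp 1 := le_trans hsinh_le_cosh hcx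
    have hDinv : (‖z + Real.pi * Complex.I‖)⁻¹ = (2 * r)⁻¹ := by rw [hD2r]
    rw [htanh, hDinv, div_le_iff₀ hcosh_pos]
    have h9 : Real.exp 1 * Real.pi ≤ 9 := by
      nlinarith [Real.exp_one_lt_d9, Real.pi_lt_d2, Real.exp_pos 1]
    have hstep : Real.exp 1 ≤ 9 * (2 * r)⁻¹ * (2 / Real.pi * r) := by
      have heq : 9 * (2 * r)⁻¹ * (2 / Real.pi * r) = 9 / Real.pi := by
        field_simp
      rw [heq, le_div_iff₀ hpi]
      linarith
    calc ‖Complex.sinh w‖ ≤ 9 * (2 * r)⁻¹ * (2 / Real.pi * r) :=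
          le_trans hsc hstep
      _ ≤ 9 * (2 * r)⁻¹ * ‖Complex.cosh w‖ :=
          mul_le_mul_of_nonneg_left hcosh_ge (by positivity)
      _ ≤ 9 * (1 + (2 * r)⁻¹) * ‖Complex.cosh w‖ := by
          apply mul_le_mul_of_nonneg_right _ hcosh_pos.le
          have : (0:ℝ) ≤ (2 * r)⁻¹ := by positivity
          linarith
  · -- big real part: |tanh| ≤ 2
    have h1x : 1 ≤ w.re ^ 2 := by nlinarith [abs_nonneg w.re, _root_.sq_abs w.re]
    have hs1 : 1 ≤ Real.sinh w.re ^ 2 := le_trans h1x (sq_le_sinh_sq w.re)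
    have hle : ‖Complex.sinh w‖ ≤ 2 * ‖Complex.cosh w‖ := by
      nlinarith [Real.sin_sq_le_one w.im, sq_nonneg (Real.cos w.im)]
    have h2' : ‖Complex.tanh w‖ ≤ 2 := by
      rw [htanh, div_le_iff₀ hcosh_pos]; linarith
    linarith

lemma exp_dom (d t : ℝ) (hd : 1 ≤ d) (ht : 0 ≤ t) :
    t + Real.pi + 1 ≤ (d + 5) * Real.exp (t / d) := by
  have h2 : 1 + t / d ≤ Real.exp (t / d) := by
    have := Real.add_one_le_exp (t / d); linarith
  have hd0 : (0:ℝ) < d := by linarith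
  have h3 : d * (1 + t / d) = d + t := by field_simp
  have hπ : Real.pi ≤ 4 := Real.pi_le_four
  have h5 : (d + 5) * (1 + t / d) ≤ (d + 5) * Real.exp (t / d) :=
    mul_le_mul_of_nonneg_left h2 (by linarith)
  have h6 : 0 ≤ t / d := div_nonneg ht hd0.le
  nlinarith [h5, h3]


/-- Pointwise bound for `T_{2k+1}` on the tube
`Im ζ₁ < ⋯ < Im ζ_{2k+1} < Im ζ₁ + π`. -/
theorem T_pointwise_bound (k : ℕ) :
    ∃ c : ℝ, 0 < c ∧ ∀ ζ : Fin (2 * k + 1) → ℂ,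
      (∀ i j : Fin (2 * k + 1), i < j → (ζ i).im < (ζ j).im) →
      (ζ (Fin.last (2 * k))).im < (ζ 0).im + Real.pi →
      ‖T (2 * k + 1) ζ‖ ≤
        c * (∏ p ∈ Finset.univ.filter
              (fun p : Fin (2 * k + 1) × Fin (2 * k + 1) => p.1 < p.2),
              ‖ζ p.1 - ζ p.2 + Real.pi * Complex.I‖⁻¹) *
          Real.exp (∑ j : Fin (2 * k + 1), |(ζ j).re|) := by
  classical
  set S : Finset (Fin (2 * k + 1) × Fin (2 * k + 1)) :=
    Finset.univ.filter (fun p => p.1 < p.2) with hS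
  set d : ℝ := 2 * (2 * k + 1) with hd
  have hd1 : (1:ℝ) ≤ d := by
    rw [hd]; push_cast; nlinarith [Nat.cast_nonneg (α := ℝ) k]
  set N : ℝ := (Fintype.card (Equiv.Perm (Fin (2 * k + 1))) : ℝ) with hN
  have hNpos : 0 < N := by
    rw [hN]; exact_mod_cast Fintype.card_pos
  refine ⟨N * (9 * (d + 5)) ^ S.card, by positivity, ?_⟩
  intro ζ hIm hwin
  set f : Fin (2 * k + 1) → ℝ := fun i => |(ζ i).re| with hf
  set X : ℝ := ∑ j : Fin (2 * k + 1), f j with hX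
  set D : Fin (2 * k + 1) × Fin (2 * k + 1) → ℝ :=
    fun p => ‖ζ p.1 - ζ p.2 + Real.pi * Complex.I‖ with hD
  set g : Fin (2 * k + 1) × Fin (2 * k + 1) → ℝ :=
    fun p => 9 * (d + 5) * Real.exp ((f p.1 + f p.2) / d) * (D p)⁻¹ with hg
  -- basic im facts for ordered pairs
  have himpq : ∀ p q : Fin (2 * k + 1), p < q →
      -Real.pi < (ζ p - ζ q).im ∧ (ζ p - ζ q).im < 0 := by
    intro p q hpq
    have h1 : (ζ p).im < (ζ q).im := hIm p q hpq
    have hq : (ζ q).im ≤ (ζ (Fin.last (2 * k))).im := by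
      rcases eq_or_lt_of_le (Fin.le_last q) with h | h
      · rw [h]
      · exact (hIm q _ h).le
    have hp : (ζ 0).im ≤ (ζ p).im := by
      rcases eq_or_lt_of_le (Fin.zero_le p) with h | h
      · rw [← h]
      · exact (hIm 0 p h).le
    constructor
    · simp only [Complex.sub_im]; linarith
    · simp only [Complex.sub_im]; linarith
  have himD : ∀ p q : Fin (2 * k + 1),
      (ζ p - ζ q + Real.pi * Complex.I).im = (ζ p).im - (ζ q).im + Real.pi := by
    intro p q; simp
  have hDpos : ∀ p ∈ S, 0 < D p := by
    intro p hp
    have hlt : p.1 < p.2 := by simpa [hS] using hp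
    obtain ⟨hA, hB⟩ := himpq p.1 p.2 hlt
    rw [hD]
    apply norm_pos_iff.mpr
    intro h0
    have := congrArg Complex.im h0
    rw [himD] at this
    simp only [Complex.zero_im, Complex.sub_im] at this
    simp only [Complex.sub_im] at hA
    linarith
  have hDle : ∀ p ∈ S, D p ≤ f p.1 + f p.2 + Real.pi := by
    intro p hp
    have hlt : p.1 < p.2 := by simpa [hS] using hp
    obtain ⟨hA, hB⟩ := himpq p.1 p.2 hlt
    have h1 : D p ≤ |(ζ p.1 - ζ p.2 + Real.pi * Complex.I).re| +
        |(ζ p.1 - ζ p.2 + Real.pi * Complex.I).im| :=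
      Complex.norm_le_abs_re_add_abs_im _
    have hre : (ζ p.1 - ζ p.2 + Real.pi * Complex.I).re = (ζ p.1).re - (ζ p.2).re := by
      simp
    have him' := himD p.1 p.2
    rw [hre, him'] at h1
    have h2 : |(ζ p.1).re - (ζ p.2).re| ≤ f p.1 + f p.2 := abs_sub _ _
    have h3 : |(ζ p.1).im - (ζ p.2).im + Real.pi| ≤ Real.pi := by
      rw [abs_le]
      simp only [Complex.sub_im] at hA hB
      constructor <;> nlinarith [Real.pi_pos]
    linarith
  have hBexp : ∀ p ∈ S, D p + 1 ≤ (d + 5) * Real.exp ((f p.1 + f p.2) / d) := by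
    intro p hp
    have := exp_dom d (f p.1 + f p.2) hd1 (by positivity)
    linarith [hDle p hp]
  have hg1 : ∀ p ∈ S, 1 ≤ g p := by
    intro p hp
    have hDp := hDpos p hp
    have hgp : g p = 9 * (d + 5) * Real.exp ((f p.1 + f p.2) / d) * (D p)⁻¹ := rfl
    rw [hgp, ← div_eq_mul_inv, le_div_iff₀ hDp, one_mul]
    nlinarith [hBexp p hp, Real.exp_pos ((f p.1 + f p.2) / d), hDp]
  have htanh_g : ∀ p q : Fin (2 * k + 1), p < q →
      ‖Complex.tanh ((ζ p - ζ q) / 2)‖ ≤ g (p, q) := by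
    intro p q hpq
    obtain ⟨hA, hB⟩ := himpq p q hpq
    have h1 := tanh_half_bound (ζ p - ζ q) hA hB
    have hDp := hDpos (p, q) (by simp [hS, hpq])
    have hBe := hBexp (p, q) (by simp [hS, hpq])
    refine h1.trans ?_
    have hgp : g (p, q) = 9 * (d + 5) * Real.exp ((f p + f q) / d) * (D (p, q))⁻¹ := rfl
    rw [hgp]
    have hDinv : (0:ℝ) < (D (p, q))⁻¹ := by positivity
    have hideq : 9 * (1 + (D (p, q))⁻¹) = 9 * (D (p, q) + 1) * (D (p, q))⁻¹ := by
      field_simp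
    have hDq : (‖ζ p - ζ q + Real.pi * Complex.I‖) = D (p, q) := by rw [hD]
    rw [hDq, hideq]
    apply mul_le_mul_of_nonneg_right _ hDinv.le
    nlinarith [hBe]
  -- per-permutation bound
  have key : ∀ σ : Equiv.Perm (Fin (2 * k + 1)),
      (∏ j : Fin ((2 * k + 1) / 2),
        ‖Complex.tanh ((ζ (σ ⟨2 * (j : ℕ), by have := j.isLt; omega⟩) -
          ζ (σ ⟨2 * (j : ℕ) + 1, by have := j.isLt; omega⟩)) / 2)‖) ≤ ∏ p ∈ S, g p := by
    intro σ
    set a : Fin ((2 * k + 1) / 2) → Fin (2 * k + 1) :=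
      fun j => σ ⟨2 * (j : ℕ), by have := j.isLt; omega⟩ with ha
    set b : Fin ((2 * k + 1) / 2) → Fin (2 * k + 1) :=
      fun j => σ ⟨2 * (j : ℕ) + 1, by have := j.isLt; omega⟩ with hb
    have hab : ∀ j, a j ≠ b j := by
      intro j h
      have := σ.injective h
      have := congrArg Fin.val this
      simp at this
    set φ : Fin ((2 * k + 1) / 2) → Fin (2 * k + 1) × Fin (2 * k + 1) :=
      fun j => (min (a j) (b j), max (a j) (b j)) with hφ
    have hφS : ∀ j, φ j ∈ S := by
      intro j
      simp only [hφ, hS, Finset.mem_filter, Finset.mem_univ, true_and]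
      exact min_lt_max.mpr (hab j)
    have hstep1 : ∀ j : Fin ((2 * k + 1) / 2),
        ‖Complex.tanh ((ζ (a j) - ζ (b j)) / 2)‖ ≤ g (φ j) := by
      intro j
      rcases lt_or_gt_of_ne (hab j) with h | h
      · have hmin : min (a j) (b j) = a j := min_eq_left h.le
        have hmax : max (a j) (b j) = b j := max_eq_right h.le
        have := htanh_g (a j) (b j) h
        rw [hφ]
        simpa [hmin, hmax] using this
      · have hmin : min (a j) (b j) = b j := min_eq_right h.le
        have hmax : max (a j) (b j) = a j := max_eq_left h.le
        have heq : ‖Complex.tanh ((ζ (a j) - ζ (b j)) / 2)‖ =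
            ‖Complex.tanh ((ζ (b j) - ζ (a j)) / 2)‖ := by
          rw [show (ζ (a j) - ζ (b j)) / 2 = -((ζ (b j) - ζ (a j)) / 2) by ring,
            Complex.tanh_neg, norm_neg]
        rw [heq]
        have := htanh_g (b j) (a j) h
        rw [hφ]
        simpa [hmin, hmax] using this
    have hφinj : ∀ x ∈ (Finset.univ : Finset (Fin ((2 * k + 1) / 2))),
        ∀ y ∈ Finset.univ, φ x = φ y → x = y := by
      intro x _ y _ hxy
      have h1 : min (a x) (b x) = min (a y) (b y) := congrArg Prod.fst hxy
      have hval : ∀ u v : Fin (2 * k + 1), σ u = σ v → u.val = v.val :=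
        fun u v h => congrArg Fin.val (σ.injective h)
      rcases min_cases (a x) (b x) with ⟨e1, _⟩ | ⟨e1, _⟩ <;>
        rcases min_cases (a y) (b y) with ⟨e2, _⟩ | ⟨e2, _⟩ <;>
        rw [e1, e2] at h1 <;>
        [have h2 := hval _ _ h1; have h2 := hval _ _ h1;
         have h2 := hval _ _ h1; have h2 := hval _ _ h1] <;>
        simp only [ha, hb] at h2 <;>
        (try exact absurd h2 (by omega)) <;>
        (exact Fin.ext (by omega))
    calc (∏ j : Fin ((2 * k + 1) / 2),
          ‖Complex.tanh ((ζ (a j) - ζ (b j)) / 2)‖)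
        ≤ ∏ j : Fin ((2 * k + 1) / 2), g (φ j) :=
          Finset.prod_le_prod (fun j _ => norm_nonneg _) (fun j _ => hstep1 j)
      _ = ∏ p ∈ Finset.univ.image φ, g p := (Finset.prod_image hφinj).symm
      _ ≤ ∏ p ∈ S, g p := by
          have hsub : Finset.univ.image φ ⊆ S := by
            intro p hp
            obtain ⟨j, _, rfl⟩ := Finset.mem_image.mp hp
            exact hφS j
          rw [← Finset.prod_sdiff hsub]
          have h1 : (1:ℝ) ≤ ∏ p ∈ S \ Finset.univ.image φ, g p := by
            calc (1:ℝ) = ∏ _p ∈ S \ Finset.univ.image φ, (1:ℝ) :=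
                  (Finset.prod_const_one).symm
              _ ≤ ∏ p ∈ S \ Finset.univ.image φ, g p :=
                  Finset.prod_le_prod (fun _ _ => zero_le_one)
                    (fun p hp => hg1 p (Finset.mem_sdiff.mp hp).1)
          have h2 : (0:ℝ) ≤ ∏ p ∈ Finset.univ.image φ, g p :=
            Finset.prod_nonneg fun p hp => le_trans zero_le_one (hg1 p (hsub hp))
          nlinarith [h1, h2]
  -- expand the product of g over S
  have hprodg : ∏ p ∈ S, g p ≤
      (9 * (d + 5)) ^ S.card * ((∏ p ∈ S, (D p)⁻¹) * Real.exp X) := by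
    have hexpand : ∏ p ∈ S, g p =
        (9 * (d + 5)) ^ S.card * Real.exp (∑ p ∈ S, (f p.1 + f p.2) / d) *
          ∏ p ∈ S, (D p)⁻¹ := by
      calc ∏ p ∈ S, g p
          = (∏ p ∈ S, (9 * (d + 5) * Real.exp ((f p.1 + f p.2) / d))) *
            ∏ p ∈ S, (D p)⁻¹ := Finset.prod_mul_distrib
        _ = ((∏ _p ∈ S, (9 * (d + 5))) * ∏ p ∈ S, Real.exp ((f p.1 + f p.2) / d)) *
            ∏ p ∈ S, (D p)⁻¹ := by rw [Finset.prod_mul_distrib]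
        _ = (9 * (d + 5)) ^ S.card * Real.exp (∑ p ∈ S, (f p.1 + f p.2) / d) *
            ∏ p ∈ S, (D p)⁻¹ := by rw [Finset.prod_const, Real.exp_sum]
    have hsum : ∑ p ∈ S, (f p.1 + f p.2) / d ≤ X := by
      rw [← Finset.sum_div, div_le_iff₀ (by linarith : (0:ℝ) < d)]
      have h1 : ∑ p ∈ S, (f p.1 + f p.2) ≤
          ∑ p : Fin (2 * k + 1) × Fin (2 * k + 1), (f p.1 + f p.2) :=
        Finset.sum_le_sum_of_subset_of_nonneg (Finset.filter_subset _ _)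
          (fun p _ _ => by positivity)
      have h2 : ∑ p : Fin (2 * k + 1) × Fin (2 * k + 1), (f p.1 + f p.2) = d * X := by
        rw [Fintype.sum_prod_type]
        simp only [Finset.sum_add_distrib, Finset.sum_const, Finset.card_univ,
          Fintype.card_fin, nsmul_eq_mul]
        rw [hX, hd]
        push_cast
        simp only [Finset.sum_add_distrib, ← Finset.mul_sum]
        ring
      linarith
    rw [hexpand]
    have hDprod_nonneg : (0:ℝ) ≤ ∏ p ∈ S, (D p)⁻¹ :=
      Finset.prod_nonneg fun p hp => inv_nonneg.mpr (hDpos p hp).le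
    have hmono : Real.exp (∑ p ∈ S, (f p.1 + f p.2) / d) ≤ Real.exp X :=
      Real.exp_le_exp.mpr hsum
    have hpow : (0:ℝ) ≤ (9 * (d + 5)) ^ S.card := by positivity
    calc (9 * (d + 5)) ^ S.card * Real.exp (∑ p ∈ S, (f p.1 + f p.2) / d) *
          ∏ p ∈ S, (D p)⁻¹
        ≤ (9 * (d + 5)) ^ S.card * Real.exp X * ∏ p ∈ S, (D p)⁻¹ := by
          apply mul_le_mul_of_nonneg_right _ hDprod_nonneg
          exact mul_le_mul_of_nonneg_left hmono hpow
      _ = (9 * (d + 5)) ^ S.card * ((∏ p ∈ S, (D p)⁻¹) * Real.exp X) := by ring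
  -- bound |T| by the sum of products of abs tanh
  have hT : ‖T (2 * k + 1) ζ‖ ≤
      ∑ σ : Equiv.Perm (Fin (2 * k + 1)), ∏ j : Fin ((2 * k + 1) / 2),
        ‖Complex.tanh ((ζ (σ ⟨2 * (j : ℕ), by have := j.isLt; omega⟩) -
          ζ (σ ⟨2 * (j : ℕ) + 1, by have := j.isLt; omega⟩)) / 2)‖ := by
    rw [T, norm_mul]
    have hc0 : ‖1 / ((2 ^ ((2 * k + 1) / 2) : ℂ) *
        (((2 * k + 1) / 2).factorial : ℂ))‖ ≤ 1 := by
      rw [norm_div, norm_one, norm_mul, norm_pow, Complex.norm_two, Complex.norm_natCast]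
      rw [div_le_one (by positivity)]
      have h1 : (1:ℝ) ≤ 2 ^ ((2 * k + 1) / 2) := one_le_pow₀ (by norm_num)
      have h2 : (1:ℝ) ≤ (((2 * k + 1) / 2).factorial : ℝ) :=
        Nat.one_le_cast.mpr (Nat.factorial_pos _)
      nlinarith
    have habs_sum : ‖∑ σ : Equiv.Perm (Fin (2 * k + 1)),
        ((Equiv.Perm.sign σ : ℤ) : ℂ) *
        ∏ j : Fin ((2 * k + 1) / 2),
          Complex.tanh ((ζ (σ ⟨2 * (j : ℕ), by have := j.isLt; omega⟩) -
            ζ (σ ⟨2 * (j : ℕ) + 1, by have := j.isLt; omega⟩)) / 2)‖ ≤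
        ∑ σ : Equiv.Perm (Fin (2 * k + 1)), ∏ j : Fin ((2 * k + 1) / 2),
          ‖Complex.tanh ((ζ (σ ⟨2 * (j : ℕ), by have := j.isLt; omega⟩) -
            ζ (σ ⟨2 * (j : ℕ) + 1, by have := j.isLt; omega⟩)) / 2)‖ := by
      refine le_trans (norm_sum_le _ _) (Finset.sum_le_sum fun σ _ => ?_)
      rw [norm_mul, norm_prod]
      have hs : ‖((Equiv.Perm.sign σ : ℤ) : ℂ)‖ = 1 := by
        rcases Int.units_eq_one_or (Equiv.Perm.sign σ) with h | h <;> simp [h]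
      rw [hs, one_mul]
    calc ‖1 / ((2 ^ ((2 * k + 1) / 2) : ℂ) * (((2 * k + 1) / 2).factorial : ℂ))‖ *
          ‖∑ σ : Equiv.Perm (Fin (2 * k + 1)),
            ((Equiv.Perm.sign σ : ℤ) : ℂ) *
            ∏ j : Fin ((2 * k + 1) / 2),
              Complex.tanh ((ζ (σ ⟨2 * (j : ℕ), by have := j.isLt; omega⟩) -
                ζ (σ ⟨2 * (j : ℕ) + 1, by have := j.isLt; omega⟩)) / 2)‖
        ≤ 1 * ‖∑ σ : Equiv.Perm (Fin (2 * k + 1)),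
            ((Equiv.Perm.sign σ : ℤ) : ℂ) *
            ∏ j : Fin ((2 * k + 1) / 2),
              Complex.tanh ((ζ (σ ⟨2 * (j : ℕ), by have := j.isLt; omega⟩) -
                ζ (σ ⟨2 * (j : ℕ) + 1, by have := j.isLt; omega⟩)) / 2)‖ :=
          mul_le_mul_of_nonneg_right hc0 (norm_nonneg _)
      _ ≤ ∑ σ : Equiv.Perm (Fin (2 * k + 1)), ∏ j : Fin ((2 * k + 1) / 2),
            ‖Complex.tanh ((ζ (σ ⟨2 * (j : ℕ), by have := j.isLt; omega⟩) -
              ζ (σ ⟨2 * (j : ℕ) + 1, by have := j.isLt; omega⟩)) / 2)‖ := by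
          rw [one_mul]; exact habs_sum
  -- final chain
  have hfinal : ‖T (2 * k + 1) ζ‖ ≤
      N * (9 * (d + 5)) ^ S.card * (∏ p ∈ S, (D p)⁻¹) * Real.exp X := by
    calc ‖T (2 * k + 1) ζ‖
        ≤ ∑ σ : Equiv.Perm (Fin (2 * k + 1)), ∏ j : Fin ((2 * k + 1) / 2),
            ‖Complex.tanh ((ζ (σ ⟨2 * (j : ℕ), by have := j.isLt; omega⟩) -
              ζ (σ ⟨2 * (j : ℕ) + 1, by have := j.isLt; omega⟩)) / 2)‖ := hT
      _ ≤ ∑ _σ : Equiv.Perm (Fin (2 * k + 1)), ∏ p ∈ S, g p :=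
          Finset.sum_le_sum fun σ _ => key σ
      _ = N * ∏ p ∈ S, g p := by
          rw [Finset.sum_const, Finset.card_univ, hN, nsmul_eq_mul]
      _ ≤ N * ((9 * (d + 5)) ^ S.card * ((∏ p ∈ S, (D p)⁻¹) * Real.exp X)) :=
          mul_le_mul_of_nonneg_left hprodg hNpos.le
      _ = N * (9 * (d + 5)) ^ S.card * (∏ p ∈ S, (D p)⁻¹) * Real.exp X := by ring
  exact hfinal
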